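/- Suppose I is an open interval of real numbers and U is a subgroup of Homeo⁺(I) such that U acts transitively on I (for all x,y ∈ I there is φ ∈ U with φ(x) = y), the commutator subgroup [U,U] acts freely on I, and each non-identity member of U has only finitely many fixed points in I. Then each non-identity member of U has at most one fixed point in I. -/

import Mathlib

private lemma aux_no_fix {α : Type*} [LinearOrder α] (φ θ : α → α) (hθ : StrictMono θ)
    (hcomm : ∀ z, φ (θ z) = θ (φ z)) (hS : {z | φ z = z}.Finite) {x : α}
    (hx : φ x = x) (hlt : x < θ x) : False := by
  have fix : ∀ n, φ (θ^[n] x) = θ^[n] x := by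
    intro n
    induction n with
    | zero => simpa using hx
    | succ n ih => rw [Function.iterate_succ_apply', hcomm, ih]
  have mono : StrictMono (fun n => θ^[n] x) := by
    apply strictMono_nat_of_lt_succ
    intro n
    induction n with
    | zero => simpa using hlt
    | succ n ih =>
        simp only [Function.iterate_succ_apply' θ (n+1), Function.iterate_succ_apply' θ n] at ih ⊢
        exact hθ ih
  have hinf : (Set.range fun n => θ^[n] x).Infinite :=
    Set.infinite_range_of_injective mono.injective
  exact hinf (hS.subset (by rintro _ ⟨n, rfl⟩; exact fix n))

private lemma perm_inv_apply_self {α : Type*} (f : Equiv.Perm α) (x : α) : f⁻¹ (f x) = x :=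
  f.symm_apply_apply x

private lemma perm_apply_inv_self {α : Type*} (f : Equiv.Perm α) (x : α) : f (f⁻¹ x) = x :=
  f.apply_symm_apply x

open scoped commutatorElement

/-- If `I` is an open interval of reals (open, order-connected, nonempty subset of `ℝ`) and
`U ≤ Homeo⁺(I)` (modelled as a subgroup of `Equiv.Perm I` of strictly monotone permutations)
acts transitively on `I`, its commutator subgroup `⁅U,U⁆` acts freely on `I`, and each
non-identity member of `U` has only finitely many fixed points, then each non-identity
member of `U` has at most one fixed point. -/
theorem stmt_11 (I : Set ℝ) (hIopen : IsOpen I) (hIconn : I.OrdConnected) (hIne : I.Nonempty)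
    (U : Subgroup (Equiv.Perm I))
    (hmono : ∀ φ ∈ U, StrictMono (⇑φ))
    (htrans : ∀ x y : I, ∃ φ ∈ U, φ x = y)
    (hfree : ∀ φ ∈ ⁅U, U⁆, φ ≠ 1 → ∀ x : I, φ x ≠ x)
    (hfin : ∀ φ ∈ U, φ ≠ 1 → {x : I | φ x = x}.Finite) :
    ∀ φ ∈ U, φ ≠ 1 → ∀ x y : I, φ x = x → φ y = y → x = y := by
  intro φ hφU hφne x y hx hy
  obtain ⟨ψ₁, hψ₁U, hψ₁⟩ := htrans x x
  obtain ⟨ψ₂, hψ₂U, hψ₂⟩ := htrans y x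
  set h : Equiv.Perm I := ⁅ψ₁, φ⁆ * ⁅φ, ψ₂⁆ with hh
  have hmem : h ∈ ⁅U, U⁆ :=
    mul_mem (Subgroup.commutator_mem_commutator hψ₁U hφU)
      (Subgroup.commutator_mem_commutator hφU hψ₂U)
  have hψ₂inv : ψ₂⁻¹ x = y := by rw [← hψ₂, perm_inv_apply_self]
  have hφinv : φ⁻¹ y = y := by conv_lhs => rw [← hy, perm_inv_apply_self]
  have hφinvx : φ⁻¹ x = x := by conv_lhs => rw [← hx, perm_inv_apply_self]
  have hψ₁inv : ψ₁⁻¹ x = x := by conv_lhs => rw [← hψ₁, perm_inv_apply_self]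
  have hfixh : h x = x := by
    simp only [hh, commutatorElement_def, Equiv.Perm.mul_apply]
    rw [hψ₂inv, hφinv, hψ₂, hx, hφinvx, hψ₁inv, hx, hψ₁]
  have h1 : h = 1 := by
    by_contra hne
    exact hfree h hmem hne x hfixh
  -- derive that θ := ψ₂⁻¹ * ψ₁ commutes with φ
  have e1 : ⁅ψ₁, φ⁆ = ⁅ψ₂, φ⁆ := by
    have := eq_inv_of_mul_eq_one_left (hh ▸ h1 : ⁅ψ₁, φ⁆ * ⁅φ, ψ₂⁆ = 1)
    rwa [commutatorElement_inv] at this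
  have e2 : ψ₁ * φ * ψ₁⁻¹ = ψ₂ * φ * ψ₂⁻¹ := by
    have := e1
    rw [commutatorElement_def, commutatorElement_def] at this
    exact mul_right_cancel this
  set θ : Equiv.Perm I := ψ₂⁻¹ * ψ₁ with hθdef
  have hθU : θ ∈ U := mul_mem (inv_mem hψ₂U) hψ₁U
  have e3 : θ * φ = φ * θ := by
    have := congrArg (fun g => ψ₂⁻¹ * (g * ψ₁)) e2
    simp only [mul_assoc] at this
    simp only [inv_mul_cancel, mul_one, inv_mul_cancel_left] at this
    simp only [hθdef, mul_assoc]
    exact this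
  have hcomm : ∀ z : I, φ (θ z) = θ (φ z) := by
    intro z
    have := congrArg (fun g : Equiv.Perm I => g z) e3
    simpa [Equiv.Perm.mul_apply] using this.symm
  have hS : {z : I | φ z = z}.Finite := hfin φ hφU hφne
  have hθx : θ x = y := by
    simp only [hθdef, Equiv.Perm.mul_apply, hψ₁, hψ₂inv]
  -- θ must fix x
  rcases lt_trichotomy x (θ x) with hlt | heq | hgt
  · exact absurd (aux_no_fix (⇑φ) (⇑θ) (hmono θ hθU) hcomm hS hx hlt) not_false
  · rw [← hθx, ← heq]
  · exfalso
    have hθinvU : θ⁻¹ ∈ U := inv_mem hθU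
    have hcomm' : ∀ z : I, φ (θ⁻¹ z) = θ⁻¹ (φ z) := by
      intro z
      have hc : Commute φ θ := e3.symm
      have := congrArg (fun g : Equiv.Perm I => g z) hc.inv_right.eq
      simpa [Equiv.Perm.mul_apply] using this
    have hlt' : x < θ⁻¹ x := by
      have h2 : θ x < θ (θ⁻¹ x) := by rwa [perm_apply_inv_self]
      exact (hmono θ hθU).lt_iff_lt.mp h2
    exact aux_no_fix (⇑φ) (⇑θ⁻¹) (hmono θ⁻¹ hθinvU) hcomm' hS hx hlt'
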